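/- With K, a, b, σ, u, v as in the previous setting (σ(x)=a/x, σ(y)=b/y, u = (x − a/x)/(xy − ab/(xy)), v = (y − b/y)/(xy − ab/(xy))), the following identities hold: x + a/x = (−bu² + av² + 1)/v, y + b/y = (bu² − av² + 1)/u, and xy + ab/(xy) = (−bu² − av² + 1)/(uv). -/

import Mathlib

/-- The rational function field in two variables `x, y` over `K`. -/
noncomputable abbrev RatFunc2 (K : Type*) [Field K] : Type _ :=
  FractionRing (MvPolynomial (Fin 2) K)

lemma stmt_7_key {L : Type*} [Field L] (A B x y : L) (hx : x ≠ 0) (hy : y ≠ 0)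
    (h1 : x * x - A ≠ 0) (h2 : y * y - B ≠ 0) (h3 : (x * y) * (x * y) - A * B ≠ 0) :
    x + A / x = (-B * ((x - A / x) / (x * y - A * B / (x * y))) ^ 2
        + A * ((y - B / y) / (x * y - A * B / (x * y))) ^ 2 + 1)
        / ((y - B / y) / (x * y - A * B / (x * y))) ∧
    y + B / y = (B * ((x - A / x) / (x * y - A * B / (x * y))) ^ 2
        - A * ((y - B / y) / (x * y - A * B / (x * y))) ^ 2 + 1)
        / ((x - A / x) / (x * y - A * B / (x * y))) ∧
    x * y + A * B / (x * y) = (-B * ((x - A / x) / (x * y - A * B / (x * y))) ^ 2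
        - A * ((y - B / y) / (x * y - A * B / (x * y))) ^ 2 + 1)
        / (((x - A / x) / (x * y - A * B / (x * y))) * ((y - B / y) / (x * y - A * B / (x * y)))) := by
  have hxy : x * y ≠ 0 := mul_ne_zero hx hy
  have hD : x * y - A * B / (x * y) ≠ 0 := by
    rw [show x * y - A * B / (x * y) = ((x * y) * (x * y) - A * B) / (x * y) by field_simp]
    exact div_ne_zero h3 hxy
  have hNx : x - A / x ≠ 0 := by
    rw [show x - A / x = (x * x - A) / x by field_simp]
    exact div_ne_zero h1 hx
  have hNy : y - B / y ≠ 0 := by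
    rw [show y - B / y = (y * y - B) / y by field_simp]
    exact div_ne_zero h2 hy
  have h1' : x ^ 2 - A ≠ 0 := by rwa [sq]
  have h2' : y ^ 2 - B ≠ 0 := by rwa [sq]
  have h3' : x ^ 2 * y ^ 2 - A * B ≠ 0 := by rwa [sq, sq, mul_mul_mul_comm]
  have h3'' : y ^ 2 * x ^ 2 - B * A ≠ 0 := by rwa [mul_comm (y ^ 2), mul_comm B]
  refine ⟨?_, ?_, ?_⟩ <;> field_simp <;> ring

theorem stmt_7 (K : Type*) [Field K] (hK2 : ringChar K ≠ 2)
    (a b : K) (ha : a ≠ 0) (hb : b ≠ 0)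
    (x y u v : RatFunc2 K)
    (hx : x = algebraMap (MvPolynomial (Fin 2) K) (RatFunc2 K) (MvPolynomial.X 0))
    (hy : y = algebraMap (MvPolynomial (Fin 2) K) (RatFunc2 K) (MvPolynomial.X 1))
    (hu : u = (x - algebraMap K (RatFunc2 K) a / x) /
      (x * y - algebraMap K (RatFunc2 K) (a * b) / (x * y)))
    (hv : v = (y - algebraMap K (RatFunc2 K) b / y) /
      (x * y - algebraMap K (RatFunc2 K) (a * b) / (x * y))) :
    x + algebraMap K (RatFunc2 K) a / x
        = (-(algebraMap K (RatFunc2 K) b) * u ^ 2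
            + algebraMap K (RatFunc2 K) a * v ^ 2 + 1) / v ∧
    y + algebraMap K (RatFunc2 K) b / y
        = (algebraMap K (RatFunc2 K) b * u ^ 2
            - algebraMap K (RatFunc2 K) a * v ^ 2 + 1) / u ∧
    x * y + algebraMap K (RatFunc2 K) (a * b) / (x * y)
        = (-(algebraMap K (RatFunc2 K) b) * u ^ 2
            - algebraMap K (RatFunc2 K) a * v ^ 2 + 1) / (u * v) := by
  have hfi : Function.Injective
      (algebraMap (MvPolynomial (Fin 2) K) (RatFunc2 K)) :=
    IsFractionRing.injective _ _
  have halg : ∀ c : K, algebraMap K (RatFunc2 K) c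
      = algebraMap (MvPolynomial (Fin 2) K) _ (MvPolynomial.C c) := fun c =>
    IsScalarTower.algebraMap_apply K (MvPolynomial (Fin 2) K) _ c
  have hxne : x ≠ 0 := by
    rw [hx]
    exact fun h => MvPolynomial.X_ne_zero (0 : Fin 2) (hfi (by simpa using h))
  have hyne : y ≠ 0 := by
    rw [hy]
    exact fun h => MvPolynomial.X_ne_zero (1 : Fin 2) (hfi (by simpa using h))
  have hp1 : (MvPolynomial.X 0 ^ 2 - MvPolynomial.C a : MvPolynomial (Fin 2) K) ≠ 0 := by
    intro h
    have := congrArg (MvPolynomial.coeff (Finsupp.single (0 : Fin 2) 2)) h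
    simp [MvPolynomial.coeff_X_pow, MvPolynomial.coeff_C, Finsupp.ext_iff,
      Finsupp.single_apply, Fin.forall_fin_two] at this
  have hp2 : (MvPolynomial.X 1 ^ 2 - MvPolynomial.C b : MvPolynomial (Fin 2) K) ≠ 0 := by
    intro h
    have := congrArg (MvPolynomial.coeff (Finsupp.single (1 : Fin 2) 2)) h
    simp [MvPolynomial.coeff_X_pow, MvPolynomial.coeff_C, Finsupp.ext_iff,
      Finsupp.single_apply, Fin.forall_fin_two] at this
  have hp3 : (MvPolynomial.X 0 ^ 2 * MvPolynomial.X 1 ^ 2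
      - MvPolynomial.C (a * b) : MvPolynomial (Fin 2) K) ≠ 0 := by
    intro h
    have := congrArg (MvPolynomial.coeff
      (Finsupp.single (0 : Fin 2) 2 + Finsupp.single (1 : Fin 2) 2)) h
    rw [MvPolynomial.coeff_sub, MvPolynomial.X_pow_eq_monomial, MvPolynomial.X_pow_eq_monomial,
      MvPolynomial.monomial_mul, MvPolynomial.coeff_monomial, MvPolynomial.coeff_C] at this
    simp [Finsupp.ext_iff, Finsupp.single_apply, Fin.forall_fin_two] at this
  have h1 : x * x - algebraMap K (RatFunc2 K) a ≠ 0 := by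
    rw [hx, halg]
    intro h
    exact hp1 (hfi (by rw [map_sub, map_pow]; simpa [sq] using h))
  have h2 : y * y - algebraMap K (RatFunc2 K) b ≠ 0 := by
    rw [hy, halg]
    intro h
    exact hp2 (hfi (by rw [map_sub, map_pow]; simpa [sq] using h))
  have h3 : (x * y) * (x * y)
      - algebraMap K (RatFunc2 K) a * algebraMap K (RatFunc2 K) b ≠ 0 := by
    rw [hx, hy, halg, halg]
    intro h
    exact hp3 (hfi (by
      rw [map_sub, map_mul, map_pow, map_pow, map_mul]
      simpa [sq, mul_mul_mul_comm] using h))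
  rw [map_mul] at hu hv ⊢
  rw [hu, hv]
  exact stmt_7_key _ _ x y hxne hyne h1 h2 h3
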